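/- Let S be a Perron semigroup of real 2×2 matrices, not containing the zero matrix, whose index is two (equivalently, every matrix of S has expansion index two). Then either S₁ = {I}, or S₁ = {I, M} where M is a matrix with M² = I and M ≠ ±I (i.e., M is similar to the mirror symmetry diag(1, −1)). -/

import Mathlib

open Matrix

open scoped Classical

/-- A complex number `μ` is an eigenvalue of the complex matrix `M`. -/
def IsEigenvalueC {n : Type*} [Fintype n] (M : Matrix n n ℂ) (μ : ℂ) : Prop :=
  ∃ v : n → ℂ, v ≠ 0 ∧ M.mulVec v = μ • v

/-- The spectral radius of a real matrix: the maximum of the moduli of the complex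
eigenvalues of its complexification. -/
noncomputable def spectralRadius' {n : Type*} [Fintype n] (A : Matrix n n ℝ) : ℝ :=
  sSup {r : ℝ | ∃ μ : ℂ, IsEigenvalueC (A.map (fun x : ℝ => (x : ℂ))) μ ∧ r = ‖μ‖}

/-- `A` has a Perron eigenvalue: its spectral radius is a nonnegative eigenvalue of `A`. -/
def HasPerronEigenvalue {n : Type*} [Fintype n] (A : Matrix n n ℝ) : Prop :=
  0 ≤ spectralRadius' A ∧ ∃ v : n → ℝ, v ≠ 0 ∧ A.mulVec v = spectralRadius' A • v

/-- The expansion index of a real matrix: the sum, over all (complex) leading eigenvalues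
(those of modulus equal to the spectral radius), of their geometric multiplicities. -/
noncomputable def expansionIndex {n : Type*} [Fintype n] [DecidableEq n]
    (A : Matrix n n ℝ) : ℕ :=
  ∑ μ ∈ (((A.map (fun x : ℝ => (x : ℂ))).charpoly.roots.toFinset).filter
      (fun μ => ‖μ‖ = spectralRadius' A)),
    Module.finrank ℂ
      (LinearMap.ker (Matrix.toLin' ((A.map (fun x : ℝ => (x : ℂ))) - μ • (1 : Matrix n n ℂ))))

/-- A (multiplicative) semigroup of matrices: a nonempty set closed under multiplication. -/
def IsMatrixSemigroup {n : Type*} [Fintype n] (S : Set (Matrix n n ℝ)) : Prop :=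
  S.Nonempty ∧ ∀ A ∈ S, ∀ B ∈ S, A * B ∈ S

/-- An irreducible set of matrices: no common invariant subspace other than `{0}` and the
whole space. -/
def MatIrreducible {n : Type*} [Fintype n] (S : Set (Matrix n n ℝ)) : Prop :=
  ¬ ∃ V : Submodule ℝ (n → ℝ), V ≠ ⊥ ∧ V ≠ ⊤ ∧ ∀ A ∈ S, ∀ x ∈ V, A.mulVec x ∈ V

/-- A proper cone: a closed convex cone with nonempty interior which is pointed. -/
def IsProperCone {n : Type*} [Fintype n] (K : Set (n → ℝ)) : Prop :=
  IsClosed K ∧ (∀ x ∈ K, ∀ y ∈ K, x + y ∈ K) ∧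
    (∀ t : ℝ, 0 ≤ t → ∀ x ∈ K, t • x ∈ K) ∧
    (interior K).Nonempty ∧ (∀ x ∈ K, -x ∈ K → x = 0)

/-- The normalized set `S₁` of a semigroup `S`: matrices of positive spectral radius are
divided by their spectral radius; matrices of zero spectral radius are kept as is. -/
def normalizedSet {n : Type*} [Fintype n] (S : Set (Matrix n n ℝ)) : Set (Matrix n n ℝ) :=
  {B | ∃ A ∈ S, 0 < spectralRadius' A ∧ B = (spectralRadius' A)⁻¹ • A} ∪
    {A ∈ S | spectralRadius' A = 0}

open Polynomial in
lemma charpoly_fin_two' (M : Matrix (Fin 2) (Fin 2) ℂ) :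
    M.charpoly = X ^ 2 - C (trace M) * X + C (det M) := by
  rw [Matrix.charpoly, Matrix.det_fin_two]
  simp [Matrix.charmatrix_apply_eq, Matrix.charmatrix_apply_ne, Matrix.trace_fin_two,
    Matrix.det_fin_two]
  ring

lemma det_sub_smul_one (M : Matrix (Fin 2) (Fin 2) ℂ) (μ : ℂ) :
    det (M - μ • 1) = μ ^ 2 - trace M * μ + det M := by
  simp [Matrix.det_fin_two, Matrix.trace_fin_two, Matrix.one_apply, Matrix.smul_apply]
  ring

lemma isEig_iff_det {n : Type*} [Fintype n] [DecidableEq n] (M : Matrix n n ℂ) (μ : ℂ) :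
    IsEigenvalueC M μ ↔ det (M - μ • 1) = 0 := by
  rw [← Matrix.exists_mulVec_eq_zero_iff]
  unfold IsEigenvalueC
  constructor
  · rintro ⟨v, hv, h⟩
    exact ⟨v, hv, by
      rw [Matrix.sub_mulVec, h, Matrix.smul_mulVec, Matrix.one_mulVec, sub_self]⟩
  · rintro ⟨v, hv, h⟩
    refine ⟨v, hv, ?_⟩
    have h3 := Matrix.sub_mulVec M (μ • 1) v
    rw [h, Matrix.smul_mulVec, Matrix.one_mulVec] at h3
    exact sub_eq_zero.mp h3.symm

/-- complexification of a real matrix -/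
noncomputable def cmplx (A : Matrix (Fin 2) (Fin 2) ℝ) : Matrix (Fin 2) (Fin 2) ℂ :=
  A.map (fun x : ℝ => (x : ℂ))

lemma trace_cmplx (A : Matrix (Fin 2) (Fin 2) ℝ) : trace (cmplx A) = ((trace A : ℝ) : ℂ) := by
  simp [cmplx, Matrix.trace_fin_two, Matrix.map_apply]

lemma det_cmplx (A : Matrix (Fin 2) (Fin 2) ℝ) : det (cmplx A) = ((det A : ℝ) : ℂ) := by
  simp [cmplx, Matrix.det_fin_two, Matrix.map_apply]

lemma cmplx_eq_smul_one {A : Matrix (Fin 2) (Fin 2) ℝ} {r : ℝ}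
    (h : cmplx A = ((r : ℂ)) • 1) : A = r • 1 := by
  ext i j
  have := Matrix.ext_iff.mpr h i j
  simp only [cmplx, Matrix.map_apply, Matrix.smul_apply, Matrix.one_apply] at this
  simp only [Matrix.smul_apply, Matrix.one_apply]
  by_cases hij : i = j <;> simp [hij] at this ⊢ <;> exact_mod_cast this

lemma matrix_eq_zero_of_ker_two (N : Matrix (Fin 2) (Fin 2) ℂ)
    (h : 2 ≤ Module.finrank ℂ (LinearMap.ker (Matrix.toLin' N))) : N = 0 := by
  have h2 : Module.finrank ℂ (Fin 2 → ℂ) = 2 := by simp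
  have hle := Submodule.finrank_le (LinearMap.ker (Matrix.toLin' N))
  rw [h2] at hle
  have heq : Module.finrank ℂ (LinearMap.ker (Matrix.toLin' N))
      = Module.finrank ℂ (Fin 2 → ℂ) := by omega
  have htop := Submodule.eq_top_of_finrank_eq heq
  have hzero : Matrix.toLin' N = 0 := LinearMap.ker_eq_top.mp htop
  exact Matrix.toLin'.injective (by rw [hzero, map_zero])

open Polynomial in
lemma expansion_double (A : Matrix (Fin 2) (Fin 2) ℝ) (μ₀ : ℂ)
    (hchar : (cmplx A).charpoly = (X - C μ₀) ^ 2)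
    (hnorm : ‖μ₀‖ = spectralRadius' A) (hI : 2 ≤ expansionIndex A) :
    cmplx A = μ₀ • 1 := by
  have hroots : (cmplx A).charpoly.roots = {μ₀, μ₀} := by
    rw [hchar, roots_pow, roots_X_sub_C]
    rfl
  have hfin : (cmplx A).charpoly.roots.toFinset = {μ₀} := by
    rw [hroots]; simp
  have hEI : expansionIndex A =
      Module.finrank ℂ (LinearMap.ker (Matrix.toLin' ((cmplx A) - μ₀ • 1))) := by
    unfold expansionIndex
    rw [show A.map (fun x : ℝ => (x : ℂ)) = cmplx A from rfl, hfin]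
    rw [Finset.filter_singleton, if_pos hnorm, Finset.sum_singleton]
  rw [hEI] at hI
  have := matrix_eq_zero_of_ker_two _ hI
  rwa [sub_eq_zero] at this

lemma ker_finrank_le_one (N : Matrix (Fin 2) (Fin 2) ℂ) (hN : N ≠ 0) :
    Module.finrank ℂ (LinearMap.ker (Matrix.toLin' N)) ≤ 1 := by
  have hrn := LinearMap.finrank_range_add_finrank_ker (Matrix.toLin' N)
  have h2 : Module.finrank ℂ (Fin 2 → ℂ) = 2 := by simp
  rw [h2] at hrn
  have hne : Matrix.toLin' N ≠ 0 := fun h => hN (Matrix.toLin'.injective (by rw [h, map_zero]))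
  have hnt : Nontrivial (LinearMap.range (Matrix.toLin' N)) := by
    rw [Submodule.nontrivial_iff_ne_bot]
    intro hb
    exact hne (LinearMap.range_eq_bot.mp hb)
  have hpos : 0 < Module.finrank ℂ (LinearMap.range (Matrix.toLin' N)) :=
    Module.finrank_pos_iff.mpr hnt
  omega

open Polynomial in
lemma classify (A : Matrix (Fin 2) (Fin 2) ℝ) (hA : A ≠ 0)
    (hP : HasPerronEigenvalue A) (hI : 2 ≤ expansionIndex A) :
    0 < spectralRadius' A ∧
      (A = spectralRadius' A • 1 ∨
        (trace A = 0 ∧ det A = -(spectralRadius' A) ^ 2)) := by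
  set ρ := spectralRadius' A with hρdef
  have hρ0 : 0 ≤ ρ := hP.1
  obtain ⟨v, hv, hAv⟩ := hP.2
  -- complexified eigenvector
  have hceig : IsEigenvalueC (cmplx A) (ρ : ℂ) := by
    refine ⟨fun i => (v i : ℂ), ?_, ?_⟩
    · intro h
      apply hv
      funext i
      have := congrFun h i
      simp only [Pi.zero_apply, Complex.ofReal_eq_zero] at this
      simp [this]
    · funext i
      have h1 := congrFun hAv i
      simp only [Matrix.mulVec, dotProduct, Fin.sum_univ_two, Pi.smul_apply,
        smul_eq_mul] at h1 ⊢
      simp only [cmplx, Matrix.map_apply]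
      push_cast
      exact_mod_cast congrArg (fun x : ℝ => (x : ℂ)) h1
  have hdet0 : det (cmplx A - (ρ : ℂ) • 1) = 0 := (isEig_iff_det _ _).mp hceig
  rw [det_sub_smul_one, trace_cmplx, det_cmplx] at hdet0
  have hquad : ρ ^ 2 - trace A * ρ + det A = 0 := by exact_mod_cast hdet0
  obtain ⟨lam, htr, hd⟩ : ∃ lam, trace A = ρ + lam ∧ det A = ρ * lam :=
    ⟨trace A - ρ, by ring, by nlinarith [hquad]⟩
  have hdetfact : ∀ μ : ℂ, det (cmplx A - μ • 1) = (μ - (ρ : ℂ)) * (μ - (lam : ℂ)) := by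
    intro μ
    rw [det_sub_smul_one, trace_cmplx, det_cmplx, hd, htr, Complex.ofReal_add,
      Complex.ofReal_mul]
    ring
  have hEig : ∀ μ : ℂ, IsEigenvalueC (cmplx A) μ ↔ (μ = (ρ : ℂ) ∨ μ = (lam : ℂ)) := by
    intro μ
    rw [isEig_iff_det, hdetfact, mul_eq_zero, sub_eq_zero, sub_eq_zero]
  have hnormρ : ‖(ρ : ℂ)‖ = ρ := by
    rw [Complex.norm_real, Real.norm_eq_abs, abs_of_nonneg hρ0]
  have hnormlam : ‖(lam : ℂ)‖ = |lam| := by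
    rw [Complex.norm_real, Real.norm_eq_abs]
  have hset : {r : ℝ | ∃ μ : ℂ, IsEigenvalueC (A.map (fun x : ℝ => (x : ℂ))) μ ∧ r = ‖μ‖}
      = {ρ, |lam|} := by
    ext r
    constructor
    · rintro ⟨μ, hμ, rfl⟩
      rcases (hEig μ).mp hμ with rfl | rfl
      · left; exact hnormρ
      · right; exact hnormlam
    · rintro (rfl | rfl)
      · exact ⟨(ρ : ℂ), (hEig _).mpr (Or.inl rfl), hnormρ.symm⟩
      · exact ⟨(lam : ℂ), (hEig _).mpr (Or.inr rfl), hnormlam.symm⟩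
  have hsup : ρ = ρ ⊔ |lam| := by
    conv_lhs => rw [hρdef, spectralRadius', hset, csSup_pair]
  have hlamle : |lam| ≤ ρ := le_sup_right.trans hsup.ge
  -- characteristic polynomial factorization
  have hcharf : (cmplx A).charpoly = (X - C (ρ : ℂ)) * (X - C (lam : ℂ)) := by
    rw [charpoly_fin_two', trace_cmplx, det_cmplx, hd, htr, Complex.ofReal_add,
      Complex.ofReal_mul, map_add, _root_.map_mul]
    ring
  -- rule out ρ = 0
  have hρpos : 0 < ρ := by
    rcases hρ0.lt_or_eq with h | h
    · exact h
    · exfalso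
      have hlam0 : lam = 0 := by
        rw [← h] at hlamle
        have := abs_nonneg lam
        have : |lam| = 0 := le_antisymm hlamle this
        exact abs_eq_zero.mp this
      have hchar2 : (cmplx A).charpoly = (X - C ((ρ : ℝ) : ℂ)) ^ 2 := by
        rw [hcharf, hlam0, ← h]
        ring
      have := expansion_double A (ρ : ℂ) hchar2 (by rw [hnormρ]) hI
      have hA' : A = ρ • 1 := cmplx_eq_smul_one this
      rw [← h] at hA'
      simp at hA'
      exact hA hA'
  rcases lt_or_eq_of_le hlamle with hlt | heq
  · -- |lam| < ρ : contradiction with expansion index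
    exfalso
    have hne : (lam : ℂ) ≠ (ρ : ℂ) := by
      intro h
      have : lam = ρ := by exact_mod_cast h
      rw [this, abs_of_nonneg hρ0] at hlt
      exact lt_irrefl _ hlt
    have hroots : (cmplx A).charpoly.roots = {(ρ : ℂ), (lam : ℂ)} := by
      rw [hcharf, roots_mul (mul_ne_zero (X_sub_C_ne_zero _) (X_sub_C_ne_zero _)),
        roots_X_sub_C, roots_X_sub_C]
      rfl
    have hfin : (cmplx A).charpoly.roots.toFinset = {(ρ : ℂ), (lam : ℂ)} := by
      rw [hroots]
      simp
    have hN : cmplx A - (ρ : ℂ) • 1 ≠ 0 := by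
      intro h
      rw [sub_eq_zero] at h
      have hA' : A = ρ • 1 := cmplx_eq_smul_one h
      have : trace A = 2 * ρ := by
        rw [hA', Matrix.trace_smul, Matrix.trace_one]
        simp
        ring
      have hlρ : lam = ρ := by rw [this] at htr; linarith
      rw [hlρ, abs_of_nonneg hρ0] at hlt
      exact lt_irrefl _ hlt
    have hEI : expansionIndex A =
        Module.finrank ℂ (LinearMap.ker (Matrix.toLin' ((cmplx A) - (ρ : ℂ) • 1))) := by
      unfold expansionIndex
      rw [show A.map (fun x : ℝ => (x : ℂ)) = cmplx A from rfl, hfin]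
      rw [show ({(ρ : ℂ), (lam : ℂ)} : Finset ℂ) = insert (ρ : ℂ) {(lam : ℂ)} from rfl,
        Finset.filter_insert, if_pos hnormρ, Finset.filter_singleton,
        if_neg (by rw [hnormlam]; exact fun h => absurd h hlt.ne)]
      simp
    rw [hEI] at hI
    have := ker_finrank_le_one _ hN
    omega
  · -- |lam| = ρ
    rcases (abs_eq hρ0).mp heq with hl | hl
    · -- lam = ρ : A is scalar
      have hchar2 : (cmplx A).charpoly = (X - C ((ρ : ℝ) : ℂ)) ^ 2 := by
        rw [hcharf, hl]
        ring
      have := expansion_double A (ρ : ℂ) hchar2 (by rw [hnormρ]) hI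
      exact ⟨hρpos, Or.inl (cmplx_eq_smul_one this)⟩
    · -- lam = -ρ : mirror type
      refine ⟨hρpos, Or.inr ⟨?_, ?_⟩⟩
      · rw [htr, hl]; ring
      · rw [hd, hl]; ring

lemma cayley2 (M : Matrix (Fin 2) (Fin 2) ℝ) :
    M * M = trace M • M - det M • 1 := by
  ext i j
  fin_cases i <;> fin_cases j <;>
    simp [Matrix.mul_apply, Fin.sum_univ_two, Matrix.trace_fin_two, Matrix.det_fin_two,
      Matrix.one_apply, Matrix.smul_apply] <;> ring

/-- For a Perron semigroup of `2×2` matrices of index two (not containing the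
zero matrix), the normalized set `S₁` is `{I}` or `{I, M}` with `M` similar to a mirror
symmetry (`M² = I`, `M ≠ ±I`). -/
theorem perron_semigroup_2x2_index_two_structure
    (S : Set (Matrix (Fin 2) (Fin 2) ℝ))
    (hsemi : IsMatrixSemigroup S)
    (hzero : (0 : Matrix (Fin 2) (Fin 2) ℝ) ∉ S)
    (hperron : ∀ A ∈ S, HasPerronEigenvalue A)
    (hindex : (∀ A ∈ S, 2 ≤ expansionIndex A) ∧ (∃ A ∈ S, expansionIndex A = 2)) :
    normalizedSet S = {(1 : Matrix (Fin 2) (Fin 2) ℝ)} ∨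
      ∃ M : Matrix (Fin 2) (Fin 2) ℝ, M * M = 1 ∧ M ≠ 1 ∧ M ≠ -1 ∧
        normalizedSet S = {1, M} := by
  obtain ⟨hne, hmul⟩ := hsemi
  have hcl : ∀ A ∈ S, 0 < spectralRadius' A ∧
      (A = spectralRadius' A • 1 ∨
        (trace A = 0 ∧ det A = -(spectralRadius' A) ^ 2)) := fun A hAS =>
    classify A (fun h => hzero (h ▸ hAS)) (hperron A hAS) (hindex.1 A hAS)
  have hmem : ∀ B, B ∈ normalizedSet S ↔ ∃ A ∈ S, B = (spectralRadius' A)⁻¹ • A := by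
    intro B
    constructor
    · rintro (⟨A, hAS, _, rfl⟩ | ⟨hBS, hB0⟩)
      · exact ⟨A, hAS, rfl⟩
      · exact absurd hB0 (hcl B hBS).1.ne'
    · rintro ⟨A, hAS, rfl⟩
      exact Or.inl ⟨A, hAS, (hcl A hAS).1, rfl⟩
  have hsc : ∀ A ∈ S, A = spectralRadius' A • 1 → (spectralRadius' A)⁻¹ • A = 1 := by
    intro A hAS h
    have h2 : (spectralRadius' A)⁻¹ • A = (spectralRadius' A)⁻¹ • (spectralRadius' A • 1) :=
      congrArg (fun X => (spectralRadius' A)⁻¹ • X) h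
    rw [h2, smul_smul, inv_mul_cancel₀ (hcl A hAS).1.ne', one_smul]
  -- normalized mirror matrices : basic properties
  have hmir : ∀ A ∈ S, trace A = 0 → det A = -(spectralRadius' A) ^ 2 →
      trace ((spectralRadius' A)⁻¹ • A) = 0 ∧ det ((spectralRadius' A)⁻¹ • A) = -1 ∧
        ((spectralRadius' A)⁻¹ • A) * ((spectralRadius' A)⁻¹ • A) = 1 := by
    intro A hAS ht hd
    have hρ := (hcl A hAS).1
    have h1 : trace ((spectralRadius' A)⁻¹ • A) = 0 := by
      rw [Matrix.trace_smul, ht, smul_zero]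
    have h2 : det ((spectralRadius' A)⁻¹ • A) = -1 := by
      rw [Matrix.det_smul, hd]
      field_simp
      rw [Fintype.card_fin, one_div, inv_pow, mul_inv_cancel₀ (pow_ne_zero 2 hρ.ne')]
    refine ⟨h1, h2, ?_⟩
    rw [cayley2, h1, h2]
    simp
  -- uniqueness of the normalized mirror
  have huniq : ∀ A ∈ S, ∀ B ∈ S, trace A = 0 → det A = -(spectralRadius' A) ^ 2 →
      trace B = 0 → det B = -(spectralRadius' B) ^ 2 →
      (spectralRadius' A)⁻¹ • A = (spectralRadius' B)⁻¹ • B := by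
    intro A hAS B hBS htA hdA htB hdB
    have hρA := (hcl A hAS).1
    have hρB := (hcl B hBS).1
    have hABS := hmul A hAS B hBS
    have hσ := (hcl (A * B) hABS).1
    have hdAB : det (A * B) = det A * det B := Matrix.det_mul A B
    rcases (hcl (A * B) hABS).2 with hs | hm
    · -- A * B is scalar
      have hdet1 : det (A * B) = (spectralRadius' (A * B)) ^ 2 := by
        have h := congrArg Matrix.det hs
        rw [Matrix.det_smul, Matrix.det_one, mul_one, Fintype.card_fin] at h
        exact h
      have hσval : spectralRadius' (A * B) = spectralRadius' A * spectralRadius' B := by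
        have h2 : (spectralRadius' (A * B)) ^ 2 = (spectralRadius' A * spectralRadius' B) ^ 2 := by
          rw [← hdet1, hdAB, hdA, hdB]; ring
        nlinarith [mul_pos hρA hρB]
      have hMN : ((spectralRadius' A)⁻¹ • A) * ((spectralRadius' B)⁻¹ • B) = 1 := by
        have h1 : ((spectralRadius' A)⁻¹ • A) * ((spectralRadius' B)⁻¹ • B)
            = ((spectralRadius' A)⁻¹ * (spectralRadius' B)⁻¹) • (A * B) := by
          rw [smul_mul_assoc, mul_smul_comm, smul_smul]
        rw [h1,
          congrArg (fun X => ((spectralRadius' A)⁻¹ * (spectralRadius' B)⁻¹) • X) hs,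
          smul_smul, hσval,
          show ((spectralRadius' A)⁻¹ * (spectralRadius' B)⁻¹) *
            (spectralRadius' A * spectralRadius' B) = 1 by
              field_simp,
          one_smul]
      have hMM := (hmir A hAS htA hdA).2.2
      calc (spectralRadius' A)⁻¹ • A
          = ((spectralRadius' A)⁻¹ • A) *
              (((spectralRadius' A)⁻¹ • A) * ((spectralRadius' B)⁻¹ • B)) := by
            rw [hMN, mul_one]
        _ = (((spectralRadius' A)⁻¹ • A) * ((spectralRadius' A)⁻¹ • A)) *
              ((spectralRadius' B)⁻¹ • B) := by rw [mul_assoc]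
        _ = (spectralRadius' B)⁻¹ • B := by rw [hMM, one_mul]
    · -- A * B mirror : determinant sign contradiction
      exfalso
      have h1 : det (A * B) = -(spectralRadius' (A * B)) ^ 2 := hm.2
      nlinarith [hdA, hdB, hdAB, mul_pos hρA hρB]
  by_cases hall : ∀ A ∈ S, A = spectralRadius' A • 1
  · left
    ext B
    simp only [Set.mem_singleton_iff]
    constructor
    · intro hB
      obtain ⟨A, hAS, rfl⟩ := (hmem B).mp hB
      exact hsc A hAS (hall A hAS)
    · rintro rfl
      obtain ⟨A, hAS⟩ := hne
      exact (hmem 1).mpr ⟨A, hAS, (hsc A hAS (hall A hAS)).symm⟩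
  · right
    push_neg at hall
    obtain ⟨A₀, hA₀S, hA₀ne⟩ := hall
    have hm₀ : trace A₀ = 0 ∧ det A₀ = -(spectralRadius' A₀) ^ 2 :=
      (hcl A₀ hA₀S).2.resolve_left hA₀ne
    have hρ₀ := (hcl A₀ hA₀S).1
    obtain ⟨htM, hdM, hMM⟩ := hmir A₀ hA₀S hm₀.1 hm₀.2
    refine ⟨(spectralRadius' A₀)⁻¹ • A₀, hMM, ?_, ?_, ?_⟩
    · intro h
      rw [h] at htM
      rw [Matrix.trace_one] at htM
      norm_num at htM
    · intro h
      rw [h] at htM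
      rw [Matrix.trace_neg, Matrix.trace_one] at htM
      norm_num at htM
    · -- 1 is in the normalized set, via A₀ * A₀
      have hsqS : A₀ * A₀ ∈ S := hmul A₀ hA₀S A₀ hA₀S
      have hsqval : A₀ * A₀ = (spectralRadius' A₀) ^ 2 • 1 := by
        rw [cayley2, hm₀.1, hm₀.2]
        simp
      have hsqscalar : A₀ * A₀ = spectralRadius' (A₀ * A₀) • 1 := by
        rcases (hcl (A₀ * A₀) hsqS).2 with h | h
        · exact h
        · exfalso
          have : trace (A₀ * A₀) = 2 * (spectralRadius' A₀) ^ 2 := by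
            rw [hsqval, Matrix.trace_smul, Matrix.trace_one]
            simp
            ring
          rw [h.1] at this
          nlinarith
      have h1mem : (1 : Matrix (Fin 2) (Fin 2) ℝ) ∈ normalizedSet S :=
        (hmem 1).mpr ⟨A₀ * A₀, hsqS, (hsc _ hsqS hsqscalar).symm⟩
      ext B
      simp only [Set.mem_insert_iff, Set.mem_singleton_iff]
      constructor
      · intro hB
        obtain ⟨A, hAS, rfl⟩ := (hmem B).mp hB
        rcases (hcl A hAS).2 with h | h
        · exact Or.inl (hsc A hAS h)
        · exact Or.inr (huniq A hAS A₀ hA₀S h.1 h.2 hm₀.1 hm₀.2)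
      · rintro (rfl | rfl)
        · exact h1mem
        · exact (hmem _).mpr ⟨A₀, hA₀S, rfl⟩
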